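/- Let g : ℤ² → ℤ be a map and for primitive w = (w₁,w₂) ∈ ℤ² define ξ_w(z) = ((w₁z₁ + w₂z₂)/g(w₁,w₂)) (Jacobi symbol with odd modulus g(w₁,w₂) > 1). Fix w, v ∈ ℤ² and set q = g(w)·g(v), d = gcd(g(w), g(v)). Assume the linear forms w₁x + w₂y and v₁x + v₂y are not proportional modulo any prime divisor of d, and that gcd(w₁,w₂) = gcd(v₁,v₂) = 1. Then Σ_{z mod q} ξ_w(z)·ξ_v(z) = q·φ(d)·φ(q/d) if both q and q/d² (equivalently d and q/d) are perfect squares, and 0 otherwise. -/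

import Mathlib

open Finset

private lemma sum_range_zmod {M : Type*} [AddCommMonoid M] (m : ℕ) [NeZero m] (h : ZMod m → M) :
    ∑ i ∈ Finset.range m, h (i : ZMod m) = ∑ a : ZMod m, h a := by
  refine Finset.sum_bij' (fun i _ => (i : ZMod m)) (fun a _ => a.val)
    (fun i _ => Finset.mem_univ _)
    (fun a _ => Finset.mem_range.mpr (ZMod.val_lt a))
    (fun i hi => ZMod.val_cast_of_lt (Finset.mem_range.mp hi))
    (fun a _ => ZMod.natCast_rightInverse a)
    (fun i _ => rfl)

private lemma jacobi_val (m : ℕ) [NeZero m] (x : ℤ) :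
    jacobiSym ((x : ZMod m).val : ℤ) m = jacobiSym x m := by
  rw [jacobiSym.mod_left x m]
  congr 1
  exact ZMod.val_intCast x

private lemma isSquare_iff_even_fact {n : ℕ} (hn : n ≠ 0) :
    IsSquare n ↔ ∀ p, Even (n.factorization p) := by
  constructor
  · rintro ⟨r, rfl⟩ p
    have hr : r ≠ 0 := by rintro rfl; simp at hn
    rw [Nat.factorization_mul hr hr, Finsupp.add_apply]
    exact Even.add_self _
  · intro h
    refine ⟨n.factorization.prod fun p k => p ^ (k / 2), ?_⟩
    show n = Finsupp.prod _ _ * Finsupp.prod _ _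
    unfold Finsupp.prod
    rw [← Finset.prod_mul_distrib]
    nth_rewrite 1 [← Nat.factorization_prod_pow_eq_self hn]
    show Finsupp.prod _ _ = _
    unfold Finsupp.prod
    apply Finset.prod_congr rfl
    intro p _
    rw [← pow_add]
    congr 1
    obtain ⟨c, hc⟩ := h p
    omega

private lemma square_equiv {m n : ℕ} (hm : m ≠ 0) (hn : n ≠ 0) :
    (IsSquare (m * n) ∧ IsSquare (Nat.gcd m n)) ↔ (IsSquare m ∧ IsSquare n) := by
  have hmn : m * n ≠ 0 := mul_ne_zero hm hn
  have hd : Nat.gcd m n ≠ 0 := Nat.gcd_ne_zero_left hm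
  rw [isSquare_iff_even_fact hmn, isSquare_iff_even_fact hd, isSquare_iff_even_fact hm,
    isSquare_iff_even_fact hn]
  have hfm : ∀ p, (m * n).factorization p = m.factorization p + n.factorization p := by
    intro p; rw [Nat.factorization_mul hm hn]; rfl
  have hfd : ∀ p, (Nat.gcd m n).factorization p = min (m.factorization p) (n.factorization p) := by
    intro p; rw [Nat.factorization_gcd hm hn, Finsupp.inf_apply]
  constructor
  · rintro ⟨h1, h2⟩
    constructor <;> intro p <;>
    · have h1p := h1 p; have h2p := h2 p
      rw [hfm] at h1p; rw [hfd] at h2p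
      rcases Nat.le_total (m.factorization p) (n.factorization p) with h | h <;>
        simp only [Nat.min_eq_left, Nat.min_eq_right, h, Nat.even_add] at h1p h2p ⊢ <;> tauto
  · rintro ⟨h1, h2⟩
    refine ⟨fun p => ?_, fun p => ?_⟩
    · rw [hfm]; exact (h1 p).add (h2 p)
    · rw [hfd]
      rcases Nat.le_total (m.factorization p) (n.factorization p) with h | h <;>
        simp [Nat.min_eq_left, Nat.min_eq_right, h, h1 p, h2 p]

private lemma totient_aux : ∀ k : ℕ, k ≠ 0 → ∀ t : ℕ, (∀ p : ℕ, p.Prime → p ∣ k → p ∣ t) →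
    Nat.totient (k * t) = k * Nat.totient t := by
  intro k
  induction k using Nat.strong_induction_on with
  | _ k IH =>
    intro hk t ht
    rcases eq_or_ne k 1 with rfl | hk1
    · simp
    obtain ⟨p, pp, ⟨k', rfl⟩⟩ := Nat.exists_prime_and_dvd hk1
    have hk' : k' ≠ 0 := by rintro rfl; simp at hk
    have hpt : p ∣ t := ht p pp (Dvd.intro k' rfl)
    have hlt : k' < p * k' := by
      have := pp.two_le
      calc k' = 1 * k' := (one_mul k').symm
      _ < p * k' := by
        apply Nat.mul_lt_mul_of_lt_of_le <;> omega
    rw [mul_assoc, Nat.totient_mul_of_prime_of_dvd pp (dvd_mul_of_dvd_right hpt k'),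
      IH k' hlt hk' t (fun q hq hqk => ht q hq (Dvd.dvd.mul_left hqk p)), mul_assoc]

private lemma totient_identity {m n : ℕ} (hm : m ≠ 0) (hn : n ≠ 0) :
    Nat.totient (Nat.gcd m n) * Nat.totient (m * n / Nat.gcd m n) =
      Nat.totient m * Nat.totient n := by
  set d := Nat.gcd m n with hd
  have hd0 : d ≠ 0 := Nat.gcd_ne_zero_left hm
  have hddvd : d ∣ m * n := (Nat.gcd_dvd_left m n).trans (dvd_mul_right m n)
  have h2 : Nat.totient (m * n) = d * Nat.totient (m * n / d) := by
    have := totient_aux d hd0 (m * n / d) ?_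
    · rw [← this, Nat.mul_div_cancel' hddvd]
    · intro p hp hpd
      have hpn : p ∣ n := hpd.trans (Nat.gcd_dvd_right m n)
      have : m * n / d = n * (m / d) := by
        rw [mul_comm m n, Nat.mul_div_assoc n (Nat.gcd_dvd_left m n)]
      rw [this]
      exact Dvd.dvd.mul_right hpn _
    
  have h1 := Nat.totient_gcd_mul_totient_mul m n
  rw [← hd] at h1
  rw [h2] at h1
  have : Nat.totient d * Nat.totient (m * n / d) * d = Nat.totient m * Nat.totient n * d := by
    rw [← h1]; ring
  exact Nat.eq_of_mul_eq_mul_right (Nat.pos_of_ne_zero hd0) this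

private lemma exists_jacobi_neg_one {m : ℕ} (hm2 : Odd m) (hm1 : 1 < m) (hns : ¬ IsSquare m) :
    ∃ a : ℕ, jacobiSym (a : ℤ) m = -1 := by
  have hm0 : m ≠ 0 := by omega
  obtain ⟨p, hodd⟩ : ∃ p, ¬ Even (m.factorization p) := by
    by_contra h
    push_neg at h
    exact hns ((isSquare_iff_even_fact hm0).mpr h)
  have hp : p.Prime := by
    by_contra hp
    rw [Nat.factorization_eq_zero_of_not_prime m hp] at hodd
    exact hodd Even.zero
  haveI : Fact p.Prime := ⟨hp⟩
  set k := m.factorization p with hk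
  have hk0 : k ≠ 0 := by rintro h; rw [h] at hodd; exact hodd Even.zero
  have hkodd : Odd k := Nat.not_even_iff_odd.mp hodd
  have hpm : p ∣ m := Nat.dvd_of_factorization_pos (by omega)
  have hpodd : p ≠ 2 := by
    rintro rfl
    rw [← Nat.not_even_iff_odd] at hm2
    exact hm2 (even_iff_two_dvd.mpr hpm)
  -- a nonsquare mod p
  obtain ⟨x, hx⟩ : ∃ x : ZMod p, ¬ IsSquare x := by
    apply FiniteField.exists_nonsquare
    rw [ZMod.ringChar_zmod_n]
    exact hpodd
  set m' := ordCompl[p] m with hm'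
  have hm'0 : m' ≠ 0 := (Nat.ordCompl_pos p hm0).ne'
  have hco : Nat.Coprime (p ^ k) m' := (Nat.coprime_ordCompl hp hm0).pow_left _
  have hsplit : p ^ k * m' = m := Nat.ordProj_mul_ordCompl_eq_self m p
  obtain ⟨a, ha1, ha2⟩ := Nat.chineseRemainder hco x.val 1
  refine ⟨a, ?_⟩
  have hpk0 : p ^ k ≠ 0 := pow_ne_zero _ hp.pos.ne'
  have e1 : jacobiSym (a : ℤ) m = jacobiSym (a : ℤ) (p ^ k) * jacobiSym (a : ℤ) m' := by
    rw [← hsplit, jacobiSym.mul_right' _ hpk0 hm'0]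
  have e2 : jacobiSym (a : ℤ) m' = 1 := by
    have : ((a : ℤ)) % (m' : ℤ) = ((1 : ℤ)) % (m' : ℤ) := by
      have := ha2
      unfold Nat.ModEq at this
      exact_mod_cast congrArg (Nat.cast : ℕ → ℤ) this
    rw [jacobiSym.mod_left' this, jacobiSym.one_left]
  have e3 : jacobiSym (a : ℤ) p = -1 := by
    rw [← jacobiSym.legendreSym.to_jacobiSym]
    apply (legendreSym.eq_neg_one_iff p).mpr
    have hcast : ((a : ℤ) : ZMod p) = x := by
      have hmod : (a : ZMod p) = (x.val : ZMod p) := by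
        rw [ZMod.natCast_eq_natCast_iff]
        exact (ha1.of_dvd (dvd_pow_self p hk0))
      push_cast
      rw [hmod, ZMod.natCast_rightInverse x]
    rw [hcast]
    exact hx
  rw [e1, e2, jacobiSym.pow_right, e3, mul_one]
  exact hkodd.neg_one_pow

private lemma jacobi_sum_eq (m : ℕ) [NeZero m] (hm1 : 1 < m) (hm2 : Odd m) :
    (∑ a : ZMod m, jacobiSym ((a.val : ℤ)) m) = if IsSquare m then (m.totient : ℤ) else 0 := by
  by_cases hsq : IsSquare m
  · rw [if_pos hsq]
    obtain ⟨r, hr⟩ := hsq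
    have hr0 : r ≠ 0 := by rintro rfl; omega
    have step : ∀ j : ℕ, jacobiSym ((j : ℤ)) m = if m.Coprime j then 1 else 0 := by
      intro j
      haveI : NeZero r := ⟨hr0⟩
      rw [show jacobiSym ((j : ℤ)) m = jacobiSym ((j : ℤ)) r * jacobiSym ((j : ℤ)) r by
        rw [← jacobiSym.mul_right' _ hr0 hr0, ← hr]]
      by_cases hc : m.Coprime j
      · rw [if_pos hc]
        have h2 : Nat.Coprime j r := by
          rw [hr, Nat.coprime_mul_iff_left] at hc
          exact Nat.coprime_comm.mp hc.1
        have hg : Int.gcd ((j : ℤ)) ((r : ℕ) : ℤ) = 1 := by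
          rw [Int.gcd_natCast_natCast]; exact h2
        have := jacobiSym.sq_one hg
        rwa [pow_two] at this
      · rw [if_neg hc]
        have hg : Int.gcd ((j : ℤ)) ((r : ℕ) : ℤ) ≠ 1 := by
          rw [Int.gcd_natCast_natCast]
          intro h2
          apply hc
          rw [hr, Nat.coprime_mul_iff_left]
          exact ⟨Nat.coprime_comm.mp h2, Nat.coprime_comm.mp h2⟩
        rw [jacobiSym.eq_zero_iff_not_coprime.mpr hg, mul_zero]
    rw [Finset.sum_congr rfl (fun a _ => step a.val)]
    rw [← sum_range_zmod m (fun a : ZMod m => if m.Coprime a.val then (1:ℤ) else 0)]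
    have : ∀ i ∈ Finset.range m, (if m.Coprime ((i : ZMod m)).val then (1:ℤ) else 0)
        = (if m.Coprime i then (1:ℤ) else 0) := by
      intro i hi
      rw [ZMod.val_cast_of_lt (Finset.mem_range.mp hi)]
    rw [Finset.sum_congr rfl this, Finset.sum_boole, Nat.totient_eq_card_coprime]
  · rw [if_neg hsq]
    obtain ⟨a₀, ha₀⟩ := exists_jacobi_neg_one hm2 hm1 hsq
    have hco : Nat.Coprime a₀ m := by
      have := jacobiSym.eq_zero_iff_not_coprime (a := (a₀ : ℤ)) (b := m)
      have h2 : Int.gcd (a₀ : ℤ) m = 1 := by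
        by_contra h
        rw [this.mpr h] at ha₀
        norm_num at ha₀
      simpa [Int.gcd_natCast_natCast] using h2
    have hu : IsUnit ((a₀ : ℕ) : ZMod m) := (ZMod.isUnit_iff_coprime a₀ m).mpr hco
    set A := ∑ a : ZMod m, jacobiSym ((a.val : ℤ)) m with hA
    have key : A = -A := by
      nth_rewrite 1 [hA]
      rw [← Equiv.sum_comp (Units.mulLeft hu.unit) (fun a : ZMod m => jacobiSym ((a.val : ℤ)) m)]
      have hstep : ∀ a : ZMod m,
          jacobiSym ((((Units.mulLeft hu.unit) a).val : ℤ)) m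
            = -jacobiSym ((a.val : ℤ)) m := by
        intro a
        have h1 : (Units.mulLeft hu.unit) a = (((a₀ * a.val : ℕ) : ℤ) : ZMod m) := by
          simp only [Units.mulLeft, Equiv.coe_fn_mk, hu.unit_spec]
          push_cast
          rw [ZMod.natCast_rightInverse a]
        rw [h1, jacobi_val]
        push_cast
        rw [jacobiSym.mul_left, ha₀, neg_one_mul]
      rw [Finset.sum_congr rfl (fun a _ => hstep a), Finset.sum_neg_distrib]
    linarith

private lemma surj_int (w1 w2 v1 v2 : ℤ) (m n : ℕ)
    (hw : Int.gcd w1 w2 = 1) (hv : Int.gcd v1 v2 = 1)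
    (hδ : Int.gcd (w1 * v2 - w2 * v1) ((Nat.gcd m n : ℕ) : ℤ) = 1) (a b : ℤ) :
    ∃ z1 z2 : ℤ, (m : ℤ) ∣ (w1 * z1 + w2 * z2 - a) ∧ (n : ℤ) ∣ (v1 * z1 + v2 * z2 - b) := by
  set δ := w1 * v2 - w2 * v1 with hδdef
  set α := Int.gcdA w1 w2
  set β := Int.gcdB w1 w2
  set γ := Int.gcdA v1 v2
  set ε := Int.gcdB v1 v2
  set x := Int.gcdA δ ((Nat.gcd m n : ℕ) : ℤ)
  set y := Int.gcdB δ ((Nat.gcd m n : ℕ) : ℤ)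
  set e := Int.gcdA (m : ℤ) (n : ℤ)
  set f := Int.gcdB (m : ℤ) (n : ℤ)
  have hαβ : w1 * α + w2 * β = 1 := by
    have := Int.gcd_eq_gcd_ab w1 w2
    rw [hw] at this
    exact_mod_cast this.symm
  have hγε : v1 * γ + v2 * ε = 1 := by
    have := Int.gcd_eq_gcd_ab v1 v2
    rw [hv] at this
    exact_mod_cast this.symm
  have hxy : δ * x + ((Nat.gcd m n : ℕ) : ℤ) * y = 1 := by
    have := Int.gcd_eq_gcd_ab δ ((Nat.gcd m n : ℕ) : ℤ)
    rw [hδ] at this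
    exact_mod_cast this.symm
  have hef : (m : ℤ) * e + (n : ℤ) * f = ((Nat.gcd m n : ℕ) : ℤ) := by
    have := Int.gcd_eq_gcd_ab (m : ℤ) (n : ℤ)
    rw [Int.gcd_natCast_natCast] at this
    exact this.symm
  set c := v1 * α + v2 * β with hc
  set r := b - a * c with hrdef
  set t := x * r with ht
  set s := y * e * r with hs
  refine ⟨a * α - t * w2 + s * (m : ℤ) * γ, a * β + t * w1 + s * (m : ℤ) * ε, ?_, ?_⟩
  · exact ⟨s * (w1 * γ + w2 * ε), by linear_combination a * hαβ⟩
  · exact ⟨-(r * y * f), by linear_combination (s * (m:ℤ)) * hγε + (r * y) * hef + r * hxy⟩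

/-- Analogue of Lemma 21.1 of Friedlander–Iwaniec: with
`ξ_w(z) = ((w₁z₁ + w₂z₂) / g(w))` the Jacobi-symbol twist, `q = g(w)·g(v)`
and `d = gcd(g(w), g(v))`, assuming `w, v` primitive, `g(w), g(v)` odd and `> 1`,
and the linear forms `w₁x + w₂y`, `v₁x + v₂y` not proportional modulo any prime
divisor of `d`, one has
`Σ_{z mod q} ξ_w(z)·ξ_v(z) = q·φ(d)·φ(q/d)` if `q` and `d` are both squares,
and `0` otherwise. -/
theorem stmt_9 (g : ℤ × ℤ → ℤ) (w v : ℤ × ℤ)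
    (hgw1 : 1 < g w) (hgw2 : Odd (g w)) (hgv1 : 1 < g v) (hgv2 : Odd (g v))
    (hwprim : Int.gcd w.1 w.2 = 1) (hvprim : Int.gcd v.1 v.2 = 1)
    (q d : ℕ) (hq : q = (g w).toNat * (g v).toNat)
    (hd : d = Nat.gcd (g w).toNat (g v).toNat)
    (hprop : ∀ p : ℕ, p.Prime → p ∣ d → ¬ ((p : ℤ) ∣ (w.1 * v.2 - w.2 * v.1))) :
    (∑ z₁ ∈ Finset.range q, ∑ z₂ ∈ Finset.range q,
        jacobiSym (w.1 * (z₁ : ℤ) + w.2 * (z₂ : ℤ)) (g w).toNat *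
          jacobiSym (v.1 * (z₁ : ℤ) + v.2 * (z₂ : ℤ)) (g v).toNat) =
      if IsSquare q ∧ IsSquare d then
        (q : ℤ) * (Nat.totient d : ℤ) * (Nat.totient (q / d) : ℤ)
      else 0 := by
  set m := (g w).toNat with hmdef
  set n := (g v).toNat with hndef
  have hmz : ((m : ℕ) : ℤ) = g w := Int.toNat_of_nonneg (by linarith)
  have hnz : ((n : ℕ) : ℤ) = g v := Int.toNat_of_nonneg (by linarith)
  have hm1 : 1 < m := by
    have : (1 : ℤ) < (m : ℤ) := by rw [hmz]; exact hgw1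
    exact_mod_cast this
  have hn1 : 1 < n := by
    have : (1 : ℤ) < (n : ℤ) := by rw [hnz]; exact hgv1
    exact_mod_cast this
  have hmodd : Odd m := by rw [← Int.odd_coe_nat, hmz]; exact hgw2
  have hnodd : Odd n := by rw [← Int.odd_coe_nat, hnz]; exact hgv2
  have hm0 : m ≠ 0 := by omega
  have hn0 : n ≠ 0 := by omega
  subst hq hd
  haveI : NeZero m := ⟨hm0⟩
  haveI : NeZero n := ⟨hn0⟩
  haveI : NeZero (m * n) := ⟨by positivity⟩
  have hmq : m ∣ m * n := dvd_mul_right m n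
  have hnq : n ∣ m * n := dvd_mul_left n m
  have hδ : Int.gcd (w.1 * v.2 - w.2 * v.1) ((Nat.gcd m n : ℕ) : ℤ) = 1 := by
    by_contra hne
    have hd0 : Nat.gcd (w.1 * v.2 - w.2 * v.1).natAbs (Nat.gcd m n) ≠ 1 := by
      rw [Int.gcd] at hne
      simpa using hne
    obtain ⟨p, pp, hpdvd⟩ := Nat.exists_prime_and_dvd hd0
    have h1 : p ∣ Nat.gcd m n := hpdvd.trans (Nat.gcd_dvd_right _ _)
    have h2 : (p : ℤ) ∣ (w.1 * v.2 - w.2 * v.1) := by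
      have h3 : p ∣ (w.1 * v.2 - w.2 * v.1).natAbs := hpdvd.trans (Nat.gcd_dvd_left _ _)
      exact Int.dvd_natAbs.mp (Int.natCast_dvd_natCast.mpr h3)
    exact hprop p pp h1 h2
  set F : ZMod (m * n) × ZMod (m * n) → ZMod m × ZMod n := fun z =>
    (ZMod.castHom hmq (ZMod m) ((w.1 : ZMod (m * n)) * z.1 + (w.2 : ZMod (m * n)) * z.2),
     ZMod.castHom hnq (ZMod n) ((v.1 : ZMod (m * n)) * z.1 + (v.2 : ZMod (m * n)) * z.2)) with hF
  have hFcast : ∀ x y : ℤ, F ((x : ZMod (m * n)), (y : ZMod (m * n))) =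
      (((w.1 * x + w.2 * y : ℤ) : ZMod m), ((v.1 * x + v.2 * y : ℤ) : ZMod n)) := by
    intro x y
    rw [hF]
    dsimp only
    refine Prod.ext ?_ ?_ <;> dsimp only
    · rw [show ((w.1 : ZMod (m * n)) * ((x : ℤ) : ZMod (m * n)) +
          (w.2 : ZMod (m * n)) * ((y : ℤ) : ZMod (m * n)))
          = ((w.1 * x + w.2 * y : ℤ) : ZMod (m * n)) by push_cast; ring, map_intCast]
    · rw [show ((v.1 : ZMod (m * n)) * ((x : ℤ) : ZMod (m * n)) +
          (v.2 : ZMod (m * n)) * ((y : ℤ) : ZMod (m * n)))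
          = ((v.1 * x + v.2 * y : ℤ) : ZMod (m * n)) by push_cast; ring, map_intCast]
  have hsurj : Function.Surjective F := by
    rintro ⟨A, B⟩
    obtain ⟨z1, z2, h1, h2⟩ := surj_int w.1 w.2 v.1 v.2 m n hwprim hvprim hδ
      ((A.val : ℤ)) ((B.val : ℤ))
    refine ⟨((z1 : ZMod (m * n)), (z2 : ZMod (m * n))), ?_⟩
    rw [hFcast]
    have e1 : ((w.1 * z1 + w.2 * z2 : ℤ) : ZMod m) = A := by
      have h3 : ((w.1 * z1 + w.2 * z2 - (A.val : ℤ) : ℤ) : ZMod m) = 0 :=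
        (ZMod.intCast_zmod_eq_zero_iff_dvd _ m).mpr h1
      push_cast at h3
      have h4 := sub_eq_zero.mp h3
      push_cast
      rwa [ZMod.natCast_val, ZMod.cast_id] at h4
    have e2 : ((v.1 * z1 + v.2 * z2 : ℤ) : ZMod n) = B := by
      have h3 : ((v.1 * z1 + v.2 * z2 - (B.val : ℤ) : ℤ) : ZMod n) = 0 :=
        (ZMod.intCast_zmod_eq_zero_iff_dvd _ n).mpr h2
      push_cast at h3
      have h4 := sub_eq_zero.mp h3
      push_cast
      rwa [ZMod.natCast_val, ZMod.cast_id] at h4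
    rw [e1, e2]
  have hFsub : ∀ z z' : ZMod (m * n) × ZMod (m * n), F (z - z') = F z - F z' := by
    intro z z'
    rw [hF]
    refine Prod.ext ?_ ?_ <;> dsimp only [Prod.fst_sub, Prod.snd_sub] <;>
      rw [← map_sub] <;> congr 1 <;> ring
  have hFadd : ∀ z z' : ZMod (m * n) × ZMod (m * n), F (z + z') = F z + F z' := by
    intro z z'
    rw [hF]
    refine Prod.ext ?_ ?_ <;> dsimp only [Prod.fst_add, Prod.snd_add] <;>
      rw [← map_add] <;> congr 1 <;> ring
  have hcard0 : ∀ y : ZMod m × ZMod n,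
      (Finset.univ.filter (fun z => F z = y)).card =
        (Finset.univ.filter (fun z => F z = 0)).card := by
    intro y
    obtain ⟨zy, hzy⟩ := hsurj y
    refine Finset.card_bij' (fun z _ => z - zy) (fun z _ => z + zy) ?_ ?_ ?_ ?_
    · intro a ha
      rw [Finset.mem_filter] at ha ⊢
      exact ⟨Finset.mem_univ _, by rw [hFsub, ha.2, hzy, sub_self]⟩
    · intro a ha
      rw [Finset.mem_filter] at ha ⊢
      exact ⟨Finset.mem_univ _, by rw [hFadd, ha.2, hzy, zero_add]⟩
    · intro a _; exact sub_add_cancel a zy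
    · intro a _; exact add_sub_cancel_right a zy
  have hcount : ∀ y : ZMod m × ZMod n,
      (Finset.univ.filter (fun z => F z = y)).card = m * n := by
    have htot := Finset.card_eq_sum_card_fiberwise
      (f := F) (s := Finset.univ) (t := Finset.univ) (fun x _ => Finset.mem_univ _)
    rw [Finset.sum_congr rfl (fun y _ => hcard0 y), Finset.sum_const] at htot
    have hG : (Finset.univ : Finset (ZMod (m * n) × ZMod (m * n))).card = (m * n) * (m * n) := by
      simp [Finset.card_univ, ZMod.card]
    have hH : (Finset.univ : Finset (ZMod m × ZMod n)).card = m * n := by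
      simp [Finset.card_univ, ZMod.card]
    rw [hG, hH, smul_eq_mul] at htot
    have hc : (Finset.univ.filter (fun z => F z = 0)).card = m * n :=
      (Nat.eq_of_mul_eq_mul_left (by positivity) htot.symm)
    intro y
    rw [hcard0 y, hc]
  have key1 : ∀ x y : ℤ,
      jacobiSym (((F ((x : ZMod (m * n)), (y : ZMod (m * n)))).1.val : ℤ)) m
        = jacobiSym (w.1 * x + w.2 * y) m := by
    intro x y
    rw [hFcast x y]
    exact jacobi_val m _
  have key2 : ∀ x y : ℤ,
      jacobiSym (((F ((x : ZMod (m * n)), (y : ZMod (m * n)))).2.val : ℤ)) n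
        = jacobiSym (v.1 * x + v.2 * y) n := by
    intro x y
    rw [hFcast x y]
    exact jacobi_val n _
  have key : ∀ z1 z2 : ℕ,
      jacobiSym (w.1 * (z1 : ℤ) + w.2 * (z2 : ℤ)) m * jacobiSym (v.1 * (z1 : ℤ) + v.2 * (z2 : ℤ)) n
      = (fun zz : ZMod (m * n) × ZMod (m * n) =>
          jacobiSym (((F zz).1.val : ℤ)) m * jacobiSym (((F zz).2.val : ℤ)) n)
        (((z1 : ℕ) : ZMod (m * n)), ((z2 : ℕ) : ZMod (m * n))) := by
    intro z1 z2
    have c1 : ((z1 : ℕ) : ZMod (m * n)) = (((z1 : ℕ) : ℤ) : ZMod (m * n)) := by push_cast; rfl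
    have c2 : ((z2 : ℕ) : ZMod (m * n)) = (((z2 : ℕ) : ℤ) : ZMod (m * n)) := by push_cast; rfl
    show _ = jacobiSym _ m * jacobiSym _ n
    rw [c1, c2, key1, key2]
  calc (∑ z₁ ∈ Finset.range (m * n), ∑ z₂ ∈ Finset.range (m * n),
        jacobiSym (w.1 * (z₁ : ℤ) + w.2 * (z₂ : ℤ)) m *
          jacobiSym (v.1 * (z₁ : ℤ) + v.2 * (z₂ : ℤ)) n)
      = ∑ z₁ ∈ Finset.range (m * n), ∑ z₂ ∈ Finset.range (m * n),
        (fun zz : ZMod (m * n) × ZMod (m * n) =>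
          jacobiSym (((F zz).1.val : ℤ)) m * jacobiSym (((F zz).2.val : ℤ)) n)
          (((z₁ : ℕ) : ZMod (m * n)), ((z₂ : ℕ) : ZMod (m * n))) := by
        exact Finset.sum_congr rfl fun z1 _ => Finset.sum_congr rfl fun z2 _ => key z1 z2
    _ = ∑ z₁ ∈ Finset.range (m * n), ∑ z2 : ZMod (m * n),
        (fun zz : ZMod (m * n) × ZMod (m * n) =>
          jacobiSym (((F zz).1.val : ℤ)) m * jacobiSym (((F zz).2.val : ℤ)) n)
          (((z₁ : ℕ) : ZMod (m * n)), z2) := by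
        refine Finset.sum_congr rfl fun z1 _ => ?_
        exact sum_range_zmod (m * n) (fun z2 : ZMod (m * n) =>
          (fun zz : ZMod (m * n) × ZMod (m * n) =>
            jacobiSym (((F zz).1.val : ℤ)) m * jacobiSym (((F zz).2.val : ℤ)) n)
            (((z1 : ℕ) : ZMod (m * n)), z2))
    _ = ∑ z1 : ZMod (m * n), ∑ z2 : ZMod (m * n),
        (fun zz : ZMod (m * n) × ZMod (m * n) =>
          jacobiSym (((F zz).1.val : ℤ)) m * jacobiSym (((F zz).2.val : ℤ)) n) (z1, z2) := by
        exact sum_range_zmod (m * n) (fun z1 : ZMod (m * n) => ∑ z2 : ZMod (m * n),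
          (fun zz : ZMod (m * n) × ZMod (m * n) =>
            jacobiSym (((F zz).1.val : ℤ)) m * jacobiSym (((F zz).2.val : ℤ)) n) (z1, z2))
    _ = ∑ zz : ZMod (m * n) × ZMod (m * n),
        jacobiSym (((F zz).1.val : ℤ)) m * jacobiSym (((F zz).2.val : ℤ)) n := by
        exact (Fintype.sum_prod_type (fun zz : ZMod (m * n) × ZMod (m * n) =>
          jacobiSym (((F zz).1.val : ℤ)) m * jacobiSym (((F zz).2.val : ℤ)) n)).symm
    _ = ∑ y : ZMod m × ZMod n, ∑ z ∈ Finset.univ.filter (fun z => F z = y),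
        (jacobiSym ((y.1.val : ℤ)) m * jacobiSym ((y.2.val : ℤ)) n) := by
        exact (Finset.sum_fiberwise_of_maps_to' (s := Finset.univ) (t := Finset.univ) (g := F)
          (fun x _ => Finset.mem_univ _)
          (fun y : ZMod m × ZMod n =>
            jacobiSym ((y.1.val : ℤ)) m * jacobiSym ((y.2.val : ℤ)) n)).symm
    _ = ∑ y : ZMod m × ZMod n, ((m * n : ℕ) : ℤ) *
        (jacobiSym ((y.1.val : ℤ)) m * jacobiSym ((y.2.val : ℤ)) n) := by
        refine Finset.sum_congr rfl fun y _ => ?_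
        rw [Finset.sum_const, hcount y, nsmul_eq_mul]
    _ = ((m * n : ℕ) : ℤ) * ((∑ a : ZMod m, jacobiSym ((a.val : ℤ)) m) *
        (∑ b : ZMod n, jacobiSym ((b.val : ℤ)) n)) := by
        rw [← Finset.mul_sum]
        congr 1
        rw [Finset.sum_mul_sum]
        exact Fintype.sum_prod_type _
    _ = if IsSquare (m * n) ∧ IsSquare (Nat.gcd m n) then
          ((m * n : ℕ) : ℤ) * (Nat.totient (Nat.gcd m n) : ℤ) *
            (Nat.totient (m * n / Nat.gcd m n) : ℤ)
        else 0 := by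
        rw [jacobi_sum_eq m hm1 hmodd, jacobi_sum_eq n hn1 hnodd]
        by_cases hc : IsSquare m ∧ IsSquare n
        · have hqd : IsSquare (m * n) ∧ IsSquare (Nat.gcd m n) :=
            (square_equiv hm0 hn0).mpr hc
          rw [if_pos hc.1, if_pos hc.2, if_pos hqd]
          have hti := totient_identity hm0 hn0
          have : ((Nat.totient m : ℤ)) * (Nat.totient n : ℤ)
              = (Nat.totient (Nat.gcd m n) : ℤ) * (Nat.totient (m * n / Nat.gcd m n) : ℤ) := by
            exact_mod_cast congrArg (Nat.cast : ℕ → ℤ) hti.symm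
          rw [this]; ring
        · have hqd : ¬ (IsSquare (m * n) ∧ IsSquare (Nat.gcd m n)) :=
            fun h => hc ((square_equiv hm0 hn0).mp h)
          rw [if_neg hqd]
          rcases not_and_or.mp hc with h | h
          · rw [if_neg h]; ring
          · rw [if_neg h]; ring
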